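/- If g : ℝ → [0,∞) is a unidimensional β-log-concave function (β ≥ 0), then there exists a log-concave function h : ℝ → [0,∞) such that e^{−β} h(x) ≤ g(x) ≤ h(x) for all x ∈ ℝ. -/

import Mathlib

open Real Set

lemma core4 (z H : ℝ) (w F : Fin 4 → ℝ) (P : Fin 4 → Prop)
    (HF : ∀ i, P i → w i = z → F i ≤ H)
    (Hp : ∀ i j, P i → P j → w i < z → z < w j →
      ∀ μ : ℝ, 0 ≤ μ → μ ≤ 1 → μ * w i + (1 - μ) * w j = z →
        μ * F i + (1 - μ) * F j ≤ H) :
    ∀ (n : ℕ) (lam : Fin 4 → ℝ),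
      (Finset.univ.filter (fun i => lam i ≠ 0 ∧ w i ≠ z)).card ≤ n →
      (∀ i, 0 ≤ lam i) → (∀ i, lam i ≠ 0 → P i) →
      (∑ i, lam i * (w i - z)) = 0 →
      ∑ i, lam i * F i ≤ (∑ i, lam i) * H := by
  intro n
  induction n with
  | zero =>
    intro lam hcard h0 hP hbar
    have hemp : ∀ i, lam i = 0 ∨ w i = z := by
      intro i
      by_contra hc
      push_neg at hc
      have hmem : i ∈ Finset.univ.filter (fun i => lam i ≠ 0 ∧ w i ≠ z) := by
        simp [hc.1, hc.2]
      have := Finset.card_pos.mpr ⟨i, hmem⟩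
      omega
    rw [Finset.sum_mul]
    apply Finset.sum_le_sum
    intro i _
    rcases eq_or_ne (lam i) 0 with h | h
    · simp [h]
    · have hw : w i = z := (hemp i).resolve_left h
      exact mul_le_mul_of_nonneg_left (HF i (hP i h) hw) (h0 i)
  | succ n ih =>
    intro lam hcard h0 hP hbar
    rcases Finset.eq_empty_or_nonempty
        (Finset.univ.filter (fun i => lam i ≠ 0 ∧ w i ≠ z)) with hemp | ⟨i0, hi0⟩
    · exact ih lam (by rw [hemp]; simp) h0 hP hbar
    · simp only [Finset.mem_filter] at hi0
      obtain ⟨-, hl0, hw0⟩ := hi0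
      -- there is a point strictly left of z and one strictly right, both with positive weight
      have hex : ∃ i j : Fin 4, lam i ≠ 0 ∧ lam j ≠ 0 ∧ w i < z ∧ z < w j := by
        have hneg : ∃ i, lam i * (w i - z) < 0 := by
          by_contra hc
          push_neg at hc
          rcases lt_or_gt_of_ne hw0 with h | h
          · exact absurd (hc i0) (by nlinarith [(h0 i0).lt_of_ne' (by simpa using hl0)])
          · -- w i0 > z : then lam i0 * (w i0 - z) > 0, so some term < 0
            have hpos : 0 < lam i0 * (w i0 - z) := by
              nlinarith [(h0 i0).lt_of_ne' (by simpa using hl0)]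
            have : (0:ℝ) < ∑ i, lam i * (w i - z) := by
              have := Finset.sum_lt_sum (f := fun _ : Fin 4 => (0:ℝ))
                (g := fun i => lam i * (w i - z))
                (by intro i _; exact hc i) ⟨i0, Finset.mem_univ i0, hpos⟩
              simpa using this
            linarith
        have hpos : ∃ j, 0 < lam j * (w j - z) := by
          by_contra hc
          push_neg at hc
          obtain ⟨i, hi⟩ := hneg
          have : (∑ j, lam j * (w j - z)) < 0 := by
            have := Finset.sum_lt_sum (f := fun j => lam j * (w j - z))
              (g := fun _ : Fin 4 => (0:ℝ)) (by intro j _; exact hc j)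
              ⟨i, Finset.mem_univ i, hi⟩
            simpa using this
          linarith
        obtain ⟨i, hi⟩ := hneg
        obtain ⟨j, hj⟩ := hpos
        have hli : lam i ≠ 0 := by rintro h; simp [h] at hi
        have hlj : lam j ≠ 0 := by rintro h; simp [h] at hj
        have hwi : w i < z := by nlinarith [(h0 i).lt_of_ne' hli]
        have hwj : z < w j := by nlinarith [(h0 j).lt_of_ne' hlj]
        exact ⟨i, j, hli, hlj, hwi, hwj⟩
      obtain ⟨i, j, hli, hlj, hwi, hwj⟩ := hex
      have hij : i ≠ j := by rintro rfl; exact absurd (hwi.trans hwj) (lt_irrefl _)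
      have hwji : 0 < w j - w i := by linarith
      set μ : ℝ := (w j - z) / (w j - w i) with hμdef
      have hμ0 : 0 < μ := div_pos (by linarith) hwji
      have hμ1 : μ < 1 := by
        rw [div_lt_one hwji]; linarith
      have hcomb : μ * w i + (1 - μ) * w j = z := by
        field_simp [hμdef]
        have hμm : μ * (w j - w i) = w j - z := by
          rw [hμdef]; exact div_mul_cancel₀ _ (ne_of_gt hwji)
        linear_combination -hμm
      set m : ℝ := min (lam i / μ) (lam j / (1 - μ)) with hmdef
      have hm0 : 0 < m := lt_min (div_pos ((h0 i).lt_of_ne' hli) hμ0)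
        (div_pos ((h0 j).lt_of_ne' hlj) (by linarith))
      set lam' : Fin 4 → ℝ := fun k =>
        lam k - (if k = i then m * μ else 0) - (if k = j then m * (1 - μ) else 0)
        with hlam'
      have hl'i : lam' i = lam i - m * μ := by simp [hlam', hij]
      have hl'j : lam' j = lam j - m * (1 - μ) := by simp [hlam', hij.symm]
      have hl'k : ∀ k, k ≠ i → k ≠ j → lam' k = lam k := by
        intro k hki hkj; simp [hlam', hki, hkj]
      have hl'0 : ∀ k, 0 ≤ lam' k := by
        intro k
        rcases eq_or_ne k i with rfl | hki
        · rw [hl'i]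
          have : m ≤ lam k / μ := min_le_left _ _
          rw [le_div_iff₀ hμ0] at this
          linarith
        rcases eq_or_ne k j with rfl | hkj
        · rw [hl'j]
          have : m ≤ lam k / (1 - μ) := min_le_right _ _
          rw [le_div_iff₀ (by linarith : (0:ℝ) < 1 - μ)] at this
          linarith
        · rw [hl'k k hki hkj]; exact h0 k
      -- sums with lam'
      have hsum : ∀ f : Fin 4 → ℝ,
          ∑ k, lam' k * f k = (∑ k, lam k * f k) - m * μ * f i - m * (1 - μ) * f j := by
        intro f
        have : ∀ k, lam' k * f k = lam k * f k
            - (if k = i then m * μ * f i else 0) - (if k = j then m * (1 - μ) * f j else 0) := by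
          intro k
          rcases eq_or_ne k i with rfl | hki
          · rw [hl'i]; simp [hij]; ring
          rcases eq_or_ne k j with rfl | hkj
          · rw [hl'j]; simp [hij.symm, hki]; ring
          · rw [hl'k k hki hkj]; simp [hki, hkj]
        simp only [this, Finset.sum_sub_distrib]
        congr 1
        · congr 1
          · simp
        · simp
      have hP' : ∀ k, lam' k ≠ 0 → P k := by
        intro k hk
        rcases eq_or_ne k i with rfl | hki
        · exact hP k hli
        rcases eq_or_ne k j with rfl | hkj
        · exact hP k hlj
        · exact hP k (by rwa [hl'k k hki hkj] at hk)
      have hbar' : ∑ k, lam' k * (w k - z) = 0 := by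
        rw [hsum]
        have : μ * (w i - z) + (1 - μ) * (w j - z) = 0 := by linarith [hcomb]
        nlinarith [this]
      -- one of lam' i, lam' j is zero ; the filter card strictly drops
      have hdrop : (Finset.univ.filter (fun k => lam' k ≠ 0 ∧ w k ≠ z)).card ≤ n := by
        have hsub : ∃ k0 : Fin 4, lam' k0 = 0 ∧ (k0 = i ∨ k0 = j) ∧ w k0 ≠ z := by
          rcases min_cases (lam i / μ) (lam j / (1 - μ)) with ⟨hm, -⟩ | ⟨hm, -⟩
          · exact ⟨i, by
              rw [hl'i, hmdef, hm, div_mul_cancel₀ _ (ne_of_gt hμ0)]; ring,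
              Or.inl rfl, ne_of_lt hwi⟩
          · exact ⟨j, by
              rw [hl'j, hmdef, hm, div_mul_cancel₀ _ (by linarith : (1:ℝ) - μ ≠ 0)]; ring,
              Or.inr rfl, ne_of_gt hwj⟩
        obtain ⟨k0, hk0, hk0ij, hwk0⟩ := hsub
        have hsubset : Finset.univ.filter (fun k => lam' k ≠ 0 ∧ w k ≠ z) ⊆
            (Finset.univ.filter (fun k => lam k ≠ 0 ∧ w k ≠ z)).erase k0 := by
          intro k hk
          simp only [Finset.mem_filter, Finset.mem_univ, true_and] at hk
          rw [Finset.mem_erase]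
          constructor
          · rintro rfl; exact hk.1 hk0
          · simp only [Finset.mem_filter, Finset.mem_univ, true_and]
            refine ⟨?_, hk.2⟩
            rcases eq_or_ne k i with rfl | hki
            · exact hli
            rcases eq_or_ne k j with rfl | hkj
            · exact hlj
            · rw [← hl'k k hki hkj]; exact hk.1
        have hk0mem : k0 ∈ Finset.univ.filter (fun k => lam k ≠ 0 ∧ w k ≠ z) := by
          simp only [Finset.mem_filter, Finset.mem_univ, true_and]
          rcases hk0ij with rfl | rfl
          · exact ⟨hli, hwk0⟩
          · exact ⟨hlj, hwk0⟩
        calc (Finset.univ.filter (fun k => lam' k ≠ 0 ∧ w k ≠ z)).card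
            ≤ ((Finset.univ.filter (fun k => lam k ≠ 0 ∧ w k ≠ z)).erase k0).card :=
              Finset.card_le_card hsubset
          _ = (Finset.univ.filter (fun k => lam k ≠ 0 ∧ w k ≠ z)).card - 1 :=
              Finset.card_erase_of_mem hk0mem
          _ ≤ n := by
              have := Finset.card_pos.mpr ⟨k0, hk0mem⟩
              omega
      have hstep : μ * F i + (1 - μ) * F j ≤ H :=
        Hp i j (hP i hli) (hP j hlj) hwi hwj μ hμ0.le hμ1.le hcomb
      have hIH := ih lam' hdrop hl'0 hP' hbar'
      have e1 := hsum F
      have e2 := hsum (fun _ => (1:ℝ))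
      simp only [mul_one] at e2
      have hsum1 : ∑ k, lam' k = (∑ k, lam k) - m := by rw [e2]; ring
      have hfin : ∑ k, lam' k * F k ≤ ((∑ k, lam k) - m) * H := by
        rw [← hsum1]; exact hIH
      nlinarith [hfin, e1, mul_le_mul_of_nonneg_left hstep hm0.le]


/-- A unidimensional `β`-log-concave function `g : ℝ → [0,∞)` can be
sandwiched by a log-concave function `h`: `e^{−β} h(x) ≤ g(x) ≤ h(x)` for all `x ∈ ℝ`. -/
theorem unidimensional_beta_logconcave_sandwich
    (β : ℝ) (hβ : 0 ≤ β) (g : ℝ → ℝ) (hg0 : ∀ x, 0 ≤ g x)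
    (hgβ : ∀ x y : ℝ, ∀ α : ℝ, α ∈ Set.Icc (0:ℝ) 1 →
      Real.exp (-β) * (g x ^ α * g y ^ (1 - α)) ≤ g (α * x + (1 - α) * y)) :
    ∃ h : ℝ → ℝ, (∀ x, 0 ≤ h x) ∧
      (∀ x y : ℝ, ∀ α : ℝ, α ∈ Set.Icc (0:ℝ) 1 →
        h x ^ α * h y ^ (1 - α) ≤ h (α * x + (1 - α) * y)) ∧
      (∀ x : ℝ, Real.exp (-β) * h x ≤ g x ∧ g x ≤ h x) := by
  classical
  set S : ℝ → Set ℝ := fun x =>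
    {r | ∃ a u v : ℝ, 0 ≤ a ∧ a ≤ 1 ∧ a*u + (1-a)*v = x ∧ r = g u ^ a * g v ^ (1-a)}
    with hS
  have mem_self : ∀ x, g x ∈ S x := by
    intro x
    refine ⟨1, x, x, zero_le_one, le_refl 1, by ring, ?_⟩
    rw [Real.rpow_one]
    norm_num
  have hub : ∀ x r, r ∈ S x → r ≤ Real.exp β * g x := by
    rintro x r ⟨a, u, v, ha0, ha1, hav, rfl⟩
    have h1 := hgβ u v a ⟨ha0, ha1⟩
    rw [hav] at h1
    calc g u ^ a * g v ^ (1-a)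
        = Real.exp β * (Real.exp (-β) * (g u ^ a * g v ^ (1-a))) := by
          rw [← mul_assoc, ← Real.exp_add]; simp
      _ ≤ Real.exp β * g x := mul_le_mul_of_nonneg_left h1 (Real.exp_pos β).le
  have hbdd : ∀ x, BddAbove (S x) := fun x => ⟨_, fun r hr => hub x r hr⟩
  have hne : ∀ x, (S x).Nonempty := fun x => ⟨g x, mem_self x⟩
  set h : ℝ → ℝ := fun x => sSup (S x) with hh
  have hgle : ∀ x, g x ≤ h x := fun x => le_csSup (hbdd x) (mem_self x)
  have hle : ∀ x, h x ≤ Real.exp β * g x := fun x => csSup_le (hne x) (fun r hr => hub x r hr)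
  have hh0 : ∀ x, 0 ≤ h x := fun x => (hg0 x).trans (hgle x)
  have hpair : ∀ (w1 w2 μ : ℝ), 0 ≤ μ → μ ≤ 1 →
      g w1 ^ μ * g w2 ^ (1-μ) ≤ h (μ*w1 + (1-μ)*w2) :=
    fun w1 w2 μ hm0 hm1 => le_csSup (hbdd _) ⟨μ, w1, w2, hm0, hm1, rfl, rfl⟩
  -- the key four-point inequality
  have key4 : ∀ x y α : ℝ, 0 ≤ α → α ≤ 1 → ∀ r ∈ S x, ∀ s ∈ S y,
      r ^ α * s ^ (1-α) ≤ h (α*x + (1-α)*y) := by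
    rintro x y α hα0 hα1 r ⟨a, u, v, ha0, ha1, hav, rfl⟩ s ⟨c, p, q, hc0, hc1, hcp, rfl⟩
    set z : ℝ := α*x + (1-α)*y with hz
    set w : Fin 4 → ℝ := ![u, v, p, q] with hw
    set lam : Fin 4 → ℝ := ![a*α, (1-a)*α, c*(1-α), (1-c)*(1-α)] with hlam
    have e0 : lam 0 = a*α := rfl
    have e1 : lam 1 = (1-a)*α := rfl
    have e2 : lam 2 = c*(1-α) := rfl
    have e3 : lam 3 = (1-c)*(1-α) := rfl
    have f0 : w 0 = u := rfl
    have f1 : w 1 = v := rfl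
    have f2 : w 2 = p := rfl
    have f3 : w 3 = q := rfl
    have hl0 : ∀ i, 0 ≤ lam i := by
      intro i
      fin_cases i
      · show (0:ℝ) ≤ a*α; nlinarith
      · show (0:ℝ) ≤ (1-a)*α; nlinarith
      · show (0:ℝ) ≤ c*(1-α); nlinarith
      · show (0:ℝ) ≤ (1-c)*(1-α); nlinarith
    have hprod : (g u ^ a * g v ^ (1-a)) ^ α * (g p ^ c * g q ^ (1-c)) ^ (1-α)
        = ∏ i, g (w i) ^ lam i := by
      rw [Fin.prod_univ_four, e0, e1, e2, e3, f0, f1, f2, f3]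
      rw [Real.mul_rpow (Real.rpow_nonneg (hg0 u) a) (Real.rpow_nonneg (hg0 v) _),
          Real.mul_rpow (Real.rpow_nonneg (hg0 p) c) (Real.rpow_nonneg (hg0 q) _),
          ← Real.rpow_mul (hg0 u), ← Real.rpow_mul (hg0 v),
          ← Real.rpow_mul (hg0 p), ← Real.rpow_mul (hg0 q)]
      ring
    rw [hprod]
    by_cases hzero : ∃ i, lam i ≠ 0 ∧ g (w i) = 0
    · obtain ⟨i, hli, hgi⟩ := hzero
      have hp0 : ∏ i, g (w i) ^ lam i = 0 :=
        Finset.prod_eq_zero (Finset.mem_univ i) (by rw [hgi]; exact Real.zero_rpow hli)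
      rw [hp0]
      exact hh0 z
    · push_neg at hzero
      have hPpos : ∀ i, lam i ≠ 0 → 0 < g (w i) :=
        fun i hi => (hg0 (w i)).lt_of_ne' (hzero i hi)
      have hsum1 : ∑ i, lam i = 1 := by
        rw [Fin.sum_univ_four, e0, e1, e2, e3]; ring
      have hbar : ∑ i, lam i * (w i - z) = 0 := by
        rw [Fin.sum_univ_four, e0, e1, e2, e3, f0, f1, f2, f3, hz]
        linear_combination α * hav + (1-α) * hcp
      have hwz : ∑ k, lam k * w k = z := by
        have hexp : ∑ k, lam k * (w k - z) = (∑ k, lam k * w k) - (∑ k, lam k) * z := by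
          rw [Finset.sum_mul, ← Finset.sum_sub_distrib]
          exact Finset.sum_congr rfl (fun k _ => by ring)
        rw [hexp, hsum1, one_mul] at hbar
        linarith
      -- positivity of h z
      have hzpos : 0 < h z := by
        have hTne : (Finset.univ.filter (fun i => lam i ≠ 0)).Nonempty := by
          by_contra hcon
          rw [Finset.not_nonempty_iff_eq_empty] at hcon
          have hz0 : ∑ i, lam i = 0 := Finset.sum_eq_zero (fun i _ => by
            by_contra hli
            have : i ∈ Finset.univ.filter (fun i => lam i ≠ 0) := by simp [hli]
            rw [hcon] at this
            simp at this)
          rw [hsum1] at hz0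
          norm_num at hz0
        obtain ⟨i, hiT, hi⟩ := Finset.exists_min_image _ w hTne
        obtain ⟨j, hjT, hj⟩ := Finset.exists_max_image _ w hTne
        simp only [Finset.mem_filter, Finset.mem_univ, true_and] at hiT hjT
        have hwiz : w i ≤ z := by
          have h1 : ∑ k, lam k * w i ≤ ∑ k, lam k * w k := by
            apply Finset.sum_le_sum
            intro k _
            rcases eq_or_ne (lam k) 0 with hk | hk
            · rw [hk]; simp
            · exact mul_le_mul_of_nonneg_left (hi k (by simp [hk])) (hl0 k)
          rw [← Finset.sum_mul, hsum1, one_mul, hwz] at h1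
          exact h1
        have hwjz : z ≤ w j := by
          have h1 : ∑ k, lam k * w k ≤ ∑ k, lam k * w j := by
            apply Finset.sum_le_sum
            intro k _
            rcases eq_or_ne (lam k) 0 with hk | hk
            · rw [hk]; simp
            · exact mul_le_mul_of_nonneg_left (hj k (by simp [hk])) (hl0 k)
          rw [← Finset.sum_mul, hsum1, one_mul, hwz] at h1
          exact h1
        rcases eq_or_lt_of_le (hwiz.trans hwjz) with heq | hlt
        · -- w i = w j hence z = w i
          have hzi : z = w i := le_antisymm (by rw [heq]; exact hwjz) hwiz
          calc (0:ℝ) < g z := by rw [hzi]; exact hPpos i hiT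
            _ ≤ h z := hgle z
        · set μ' : ℝ := (w j - z) / (w j - w i) with hμ'
          have hd : 0 < w j - w i := by linarith
          have hμ'0 : 0 ≤ μ' := div_nonneg (by linarith) hd.le
          have hμ'1 : μ' ≤ 1 := by
            rw [div_le_one hd]; linarith
          have hcomb : μ' * w i + (1 - μ') * w j = z := by
            field_simp [hμ']
            have hμm : μ' * (w j - w i) = w j - z := by
              rw [hμ']; exact div_mul_cancel₀ _ (ne_of_gt hd)
            linear_combination -hμm
          have := hpair (w i) (w j) μ' hμ'0 hμ'1
          rw [hcomb] at this
          calc (0:ℝ) < g (w i) ^ μ' * g (w j) ^ (1-μ') :=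
                mul_pos (Real.rpow_pos_of_pos (hPpos i hiT) _)
                  (Real.rpow_pos_of_pos (hPpos j hjT) _)
            _ ≤ h z := this
      -- apply the core lemma
      have hcore := core4 z (Real.log (h z)) w (fun i => Real.log (g (w i)))
        (fun i => 0 < g (w i))
        (fun i hPi hwiz => Real.log_le_log hPi (by rw [hwiz]; exact hgle z))
        (by
          intro i j hPi hPj hwi hwj μ hm0 hm1 hcomb
          have hp := hpair (w i) (w j) μ hm0 hm1
          rw [hcomb] at hp
          calc μ * Real.log (g (w i)) + (1-μ) * Real.log (g (w j))
              = Real.log (g (w i) ^ μ * g (w j) ^ (1-μ)) := by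
                rw [Real.log_mul (ne_of_gt (Real.rpow_pos_of_pos hPi μ))
                  (ne_of_gt (Real.rpow_pos_of_pos hPj _)),
                  Real.log_rpow hPi, Real.log_rpow hPj]
            _ ≤ Real.log (h z) :=
                Real.log_le_log (mul_pos (Real.rpow_pos_of_pos hPi _)
                  (Real.rpow_pos_of_pos hPj _)) hp)
        4 lam (le_trans (Finset.card_filter_le _ _) (by simp)) hl0
        (fun i hi => hPpos i hi) hbar
      rw [hsum1, one_mul] at hcore
      have hlogprod : Real.log (∏ i, g (w i) ^ lam i)
          = ∑ i, lam i * Real.log (g (w i)) := by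
        rw [Real.log_prod]
        · refine Finset.sum_congr rfl (fun i _ => ?_)
          rcases eq_or_ne (lam i) 0 with hk | hk
          · rw [hk]; simp
          · rw [Real.log_rpow (hPpos i hk)]
        · intro i _
          rcases eq_or_ne (lam i) 0 with hk | hk
          · rw [hk]; simp
          · exact ne_of_gt (Real.rpow_pos_of_pos (hPpos i hk) _)
      have hprodpos : 0 < ∏ i, g (w i) ^ lam i := by
        apply Finset.prod_pos
        intro i _
        rcases eq_or_ne (lam i) 0 with hk | hk
        · rw [hk]; simp
        · exact Real.rpow_pos_of_pos (hPpos i hk) _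
      rw [← hlogprod] at hcore
      exact (Real.log_le_log_iff hprodpos hzpos).mp hcore
  -- log-concavity of h
  have hlc : ∀ x y α : ℝ, 0 ≤ α → α ≤ 1 →
      h x ^ α * h y ^ (1-α) ≤ h (α*x + (1-α)*y) := by
    intro x y α hα0 hα1
    set z : ℝ := α*x + (1-α)*y with hz
    rcases eq_or_lt_of_le (hh0 x) with hx0 | hx0
    · rcases eq_or_ne α 0 with rfl | hαne
      · have hzy : z = y := by rw [hz]; ring
        rw [Real.rpow_zero, one_mul, hzy]
        norm_num
      · rw [← hx0, Real.zero_rpow hαne, zero_mul]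
        exact hh0 z
    rcases eq_or_lt_of_le (hh0 y) with hy0 | hy0
    · rcases eq_or_ne α 1 with rfl | hαne
      · have hzx : z = x := by rw [hz]; ring
        rw [hzx]
        norm_num [Real.rpow_one]
      · rw [← hy0, Real.zero_rpow (by intro hcon; apply hαne; linarith), mul_zero]
        exact hh0 z
    by_contra hcon
    push_neg at hcon
    set M : ℝ := h x ^ α * h y ^ (1-α) with hM
    have hMpos : 0 < M :=
      mul_pos (Real.rpow_pos_of_pos hx0 _) (Real.rpow_pos_of_pos hy0 _)
    set θ : ℝ := (h z / M + 1) / 2 with hθ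
    have hr1 : h z / M < 1 := (div_lt_one hMpos).mpr hcon
    have hr0 : 0 ≤ h z / M := div_nonneg (hh0 z) hMpos.le
    have hθ0 : 0 < θ := by rw [hθ]; linarith
    have hθ1 : θ < 1 := by rw [hθ]; linarith
    have hθM : h z < θ * M := by
      have h1 : h z = (h z / M) * M := by field_simp
      rw [h1, hθ]
      apply mul_lt_mul_of_pos_right _ hMpos
      linarith
    have hxθ : θ * h x < h x := by nlinarith
    have hyθ : θ * h y < h y := by nlinarith
    obtain ⟨r, hrS, hrgt⟩ := exists_lt_of_lt_csSup (hne x) hxθ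
    obtain ⟨s, hsS, hsgt⟩ := exists_lt_of_lt_csSup (hne y) hyθ
    have hθx0 : 0 ≤ θ * h x := mul_nonneg hθ0.le (hh0 x)
    have hθy0 : 0 ≤ θ * h y := mul_nonneg hθ0.le (hh0 y)
    have h1 : (θ * h x) ^ α * (θ * h y) ^ (1-α) ≤ r ^ α * s ^ (1-α) :=
      mul_le_mul (Real.rpow_le_rpow hθx0 hrgt.le hα0)
        (Real.rpow_le_rpow hθy0 hsgt.le (by linarith))
        (Real.rpow_nonneg hθy0 _) (Real.rpow_nonneg (hθx0.trans hrgt.le) _)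
    have h2 : (θ * h x) ^ α * (θ * h y) ^ (1-α) = θ * M := by
      rw [Real.mul_rpow hθ0.le (hh0 x), Real.mul_rpow hθ0.le (hh0 y)]
      have hθθ : θ ^ α * θ ^ (1-α) = θ := by
        rw [← Real.rpow_add hθ0]
        norm_num
      calc θ ^ α * h x ^ α * (θ ^ (1-α) * h y ^ (1-α))
          = (θ ^ α * θ ^ (1-α)) * (h x ^ α * h y ^ (1-α)) := by ring
        _ = θ * M := by rw [hθθ, hM]
    have h3 := key4 x y α hα0 hα1 r hrS s hsS
    rw [← hz] at h3
    linarith [h1, h2, h3, hθM]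
  refine ⟨h, hh0, ?_, fun x => ⟨?_, hgle x⟩⟩
  · rintro x y α ⟨hα0, hα1⟩
    exact hlc x y α hα0 hα1
  · have h1 := hle x
    have h2 : Real.exp (-β) * h x ≤ Real.exp (-β) * (Real.exp β * g x) :=
      mul_le_mul_of_nonneg_left h1 (Real.exp_pos _).le
    calc Real.exp (-β) * h x ≤ Real.exp (-β) * (Real.exp β * g x) := h2
      _ = g x := by rw [← mul_assoc, ← Real.exp_add]; simp
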